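/- arXiv:q-alg/9705025 — 9 statements merged into one kernel-verified Lean document; each statement's English description precedes it below -/
import Mathlib

section
/- In a group G generated by involutions r0, r1, r2 satisfying r_i r_j r_k = r_k r_j r_i for all permutations of (0,1,2), every element of G can be written in the form r0^i * (r0*r1)^m * (r0*r2)^n with i ∈ {0,1} and m, n ∈ ℤ. -/
/-!
Put `a = r₀r₁` and `b = r₀r₂`. The relation `r₁r₀r₂ = r₂r₀r₁` says that `a` and `b` commute,
and conjugation by the involution `r₀` inverts both of them. Hence the elements `r₀^i a^m b^n`
with `i ∈ {0, 1}` form a subgroup; it contains `r₀`, `r₁ = r₀a` and `r₂ = r₀b`, so it is all of `G`.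
-/

section

variable {G : Type*} [Group G] {s a b : G}

theorem semiconjBy_mul_inv_of_mul_self_eq_one {t : G} (hs : s * s = 1) (ht : t * t = 1) :
    SemiconjBy s (s * t) (s * t)⁻¹ := by
  rw [SemiconjBy, mul_inv_rev, inv_eq_of_mul_eq_one_right hs, inv_eq_of_mul_eq_one_right ht,
    ← mul_assoc, hs, one_mul, mul_assoc, hs, mul_one]

theorem SemiconjBy.zpow_mul_eq_mul_zpow_neg (h : SemiconjBy s a a⁻¹) (k : ℤ) :
    a ^ k * s = s * a ^ (-k) := by
  rw [(h.zpow_right (-k)).eq, inv_zpow', neg_neg]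

theorem commute_mul_mul_of_mul_mul_comm {t u : G} (h : t * s * u = u * s * t) :
    Commute (s * t) (s * u) :=
  calc s * t * (s * u) = s * (t * s * u) := by group
    _ = s * (u * s * t) := by rw [h]
    _ = s * u * (s * t) := by group

variable (s a b) in
def normalForms : Set G := {g | ∃ i : ℕ, ∃ m n : ℤ, i ≤ 1 ∧ g = s ^ i * a ^ m * b ^ n}

theorem one_mem_normalForms : (1 : G) ∈ normalForms s a b :=
  ⟨0, 0, 0, zero_le_one, by simp⟩

theorem self_mul_mem_normalForms (hs : s * s = 1) {g : G} (hg : g ∈ normalForms s a b) :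
    s * g ∈ normalForms s a b := by
  obtain ⟨i, m, n, hi, rfl⟩ := hg
  interval_cases i
  · exact ⟨1, m, n, le_rfl, by group⟩
  · exact ⟨0, m, n, zero_le_one, by rw [← mul_assoc, ← mul_assoc, pow_one, hs]; group⟩

theorem pow_mul_mem_normalForms (hs : s * s = 1) (k : ℕ) {g : G} (hg : g ∈ normalForms s a b) :
    s ^ k * g ∈ normalForms s a b := by
  induction k with
  | zero => simpa using hg
  | succ k ih => simpa [pow_succ', mul_assoc] using self_mul_mem_normalForms hs ih

theorem zpow_fst_mul_mem_normalForms (hsa : SemiconjBy s a a⁻¹) (k : ℤ) {g : G}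
    (hg : g ∈ normalForms s a b) : a ^ k * g ∈ normalForms s a b := by
  obtain ⟨i, m, n, hi, rfl⟩ := hg
  interval_cases i
  · exact ⟨0, k + m, n, zero_le_one, by rw [zpow_add]; group⟩
  · refine ⟨1, -k + m, n, le_rfl, ?_⟩
    rw [zpow_add, ← mul_assoc, ← mul_assoc, pow_one, hsa.zpow_mul_eq_mul_zpow_neg, mul_assoc s]

theorem zpow_snd_mul_mem_normalForms (hab : Commute a b) (hsb : SemiconjBy s b b⁻¹) (k : ℤ)
    {g : G} (hg : g ∈ normalForms s a b) : b ^ k * g ∈ normalForms s a b := by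
  obtain ⟨i, m, n, hi, rfl⟩ := hg
  have hc : b ^ k * a ^ m = a ^ m * b ^ k := (hab.zpow_zpow m k).eq.symm
  interval_cases i
  · exact ⟨0, m, k + n, zero_le_one, by
      rw [zpow_add, pow_zero, one_mul, ← mul_assoc, hc, mul_assoc]⟩
  · refine ⟨1, m, -k + n, le_rfl, ?_⟩
    rw [zpow_add, pow_one, ← mul_assoc, ← mul_assoc, hsb.zpow_mul_eq_mul_zpow_neg, mul_assoc s,
      ← (hab.zpow_zpow m (-k)).eq]
    group

def normalFormSubgroup (hs : s * s = 1) (hab : Commute a b) (hsa : SemiconjBy s a a⁻¹)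
    (hsb : SemiconjBy s b b⁻¹) : Subgroup G where
  carrier := normalForms s a b
  one_mem' := one_mem_normalForms
  mul_mem' := by
    rintro _ _ ⟨i, m, n, -, rfl⟩ hh
    rw [mul_assoc, mul_assoc]
    exact pow_mul_mem_normalForms hs i (zpow_fst_mul_mem_normalForms hsa m
      (zpow_snd_mul_mem_normalForms hab hsb n hh))
  inv_mem' := by
    rintro _ ⟨i, m, n, -, rfl⟩
    rw [mul_inv_rev, mul_inv_rev, ← inv_pow, inv_eq_of_mul_eq_one_right hs, ← zpow_neg,
      ← zpow_neg, ← mul_one (s ^ i)]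
    exact zpow_snd_mul_mem_normalForms hab hsb (-n) (zpow_fst_mul_mem_normalForms hsa (-m)
      (pow_mul_mem_normalForms hs i one_mem_normalForms))

end

theorem stmt3 {G : Type*} [Group G] (r : Fin 3 → G)
    (hgen : Subgroup.closure (Set.range r) = ⊤)
    (hinv : ∀ i, r i * r i = 1)
    (hrel : ∀ i j k : Fin 3, i ≠ j → j ≠ k → i ≠ k →
      r i * r j * r k = r k * r j * r i) :
    ∀ g : G, ∃ (i : ℕ) (m n : ℤ), i ≤ 1 ∧
      g = r 0 ^ i * (r 0 * r 1) ^ m * (r 0 * r 2) ^ n := by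
  have hab : Commute (r 0 * r 1) (r 0 * r 2) :=
    commute_mul_mul_of_mul_mul_comm (hrel 1 0 2 (by decide) (by decide) (by decide))
  let H := normalFormSubgroup (hinv 0) hab
    (semiconjBy_mul_inv_of_mul_self_eq_one (hinv 0) (hinv 1))
    (semiconjBy_mul_inv_of_mul_self_eq_one (hinv 0) (hinv 2))
  have hr : Set.range r ⊆ H := by
    rintro _ ⟨j, rfl⟩
    fin_cases j
    · exact ⟨1, 0, 0, le_rfl, by simp⟩
    · exact ⟨1, 1, 0, le_rfl, by simp [← mul_assoc, hinv]⟩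
    · exact ⟨1, 0, 1, le_rfl, by simp [← mul_assoc, hinv]⟩
  intro g
  exact Subgroup.closure_le H |>.2 hr (hgen ▸ Subgroup.mem_top g)
end

section
/- In a group G generated by four involutions r0, r0', r1, r1' with r0 * r0' * r1 * r1' = 1, one has r0 * r1 = (r0 * r0') * (r0 * r1'), and more generally (r0 * r1)^n = (r0 * r0')^n * (r0 * r1')^n for every integer n. -/
/-!
Solving the relation for `r₁'` gives `r₁' = r₀ r₀' r₁`, hence `(r₀ r₀') (r₀ r₁') = r₀ r₁`.
Rotating the relation cyclically gives `r₁' r₀ r₀' = r₁`, hence also `(r₀ r₁') (r₀ r₀') = r₀ r₁`.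
So `r₀ r₀'` and `r₀ r₁'` commute, and the `n`-th power of their product splits.
-/

section FourInvolutions

variable {G : Type*} [Group G] {r₀ r₀' r₁ r₁' : G}

theorem mul_eq_mul_mul_mul_of_mul_mul_mul_eq_one (h0 : r₀ * r₀ = 1) (h0' : r₀' * r₀' = 1)
    (h1' : r₁' * r₁' = 1) (hrel : r₀ * r₀' * r₁ * r₁' = 1) :
    r₀ * r₁ = r₀ * r₀' * (r₀ * r₁') := by
  have hr₁' : r₁' = r₀ * r₀' * r₁ :=
    (inv_eq_of_mul_eq_one_right h1').symm.trans (eq_inv_of_mul_eq_one_left hrel).symm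
  simp only [hr₁', mul_assoc, ← mul_assoc r₀ r₀, h0, one_mul, ← mul_assoc r₀' r₀', h0']

theorem mul_mul_mul_eq_mul_of_mul_mul_mul_eq_one (h1 : r₁ * r₁ = 1)
    (hrel : r₀ * r₀' * r₁ * r₁' = 1) :
    r₀ * r₁' * (r₀ * r₀') = r₀ * r₁ := by
  have hr₁ : r₁' * (r₀ * r₀') = r₁ := by
    rw [← inv_eq_of_mul_eq_one_right h1]
    exact eq_inv_of_mul_eq_one_left (by rw [mul_assoc, mul_eq_one_comm.mp hrel])
  rw [mul_assoc, hr₁]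

end FourInvolutions

theorem stmt6 {G : Type*} [Group G] (r₀ r₀' r₁ r₁' : G)
    (h0 : r₀ * r₀ = 1) (h0' : r₀' * r₀' = 1)
    (h1 : r₁ * r₁ = 1) (h1' : r₁' * r₁' = 1)
    (hrel : r₀ * r₀' * r₁ * r₁' = 1) :
    r₀ * r₁ = (r₀ * r₀') * (r₀ * r₁') ∧
    ∀ n : ℤ, (r₀ * r₁) ^ n = (r₀ * r₀') ^ n * (r₀ * r₁') ^ n := by
  have hsplit := mul_eq_mul_mul_mul_of_mul_mul_mul_eq_one h0 h0' h1' hrel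
  have hcomm : Commute (r₀ * r₀') (r₀ * r₁') :=
    hsplit.symm.trans (mul_mul_mul_eq_mul_of_mul_mul_mul_eq_one h1 hrel).symm
  exact ⟨hsplit, fun n => by rw [hsplit, hcomm.mul_zpow]⟩
end

section
/- In a group G generated by four involutions r0, r0', r1, r1' with r0 * r0' * r1 * r1' = 1, every element of G can be written in the form r0^i * (r0*r0')^m * (r0*r1')^n with i ∈ {0,1} and m, n ∈ ℤ. -/
/-!
Put `a = r₀ r₀'` and `b = r₀ r₁'`. Conjugation by the involution `r₀` inverts both, and the
relation `r₀ r₀' r₁ r₁' = 1` forces `r₁ = r₀ a b`, which makes `a` and `b` commute. Hence `G` is a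
quotient of `ℤ² ⋊ C₂`: the words `r₀ ^ i * a ^ m * b ^ n` are stable under left multiplication by
`r₀`, `a` and `b`, so by every generator, and thus exhaust `G`.
-/

open Subgroup

theorem Subgroup.induction_of_closure_eq_top_of_involutions {G : Type*} [Group G] {s : Set G}
    (hs : closure s = ⊤) (hinv : ∀ x ∈ s, x * x = 1) {p : G → Prop} (one : p 1)
    (mul_left : ∀ x ∈ s, ∀ g, p g → p (x * g)) (g : G) : p g := by
  have hg : g ∈ closure s := hs ▸ mem_top g
  induction hg using closure_induction_left with
  | one => exact one
  | mul_left x hx y _ ih => exact mul_left x hx y ih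
  | inv_mul_cancel x hx y _ ih =>
    rw [inv_eq_of_mul_eq_one_right (hinv x hx)]
    exact mul_left x hx y ih

def HasNormalForm {G : Type*} [Group G] (r a b g : G) : Prop :=
  ∃ (i : ℕ) (m n : ℤ), i ≤ 1 ∧ g = r ^ i * a ^ m * b ^ n

namespace HasNormalForm

variable {G : Type*} [Group G] {r a b g : G}

theorem one : HasNormalForm r a b 1 := ⟨0, 0, 0, zero_le_one, by simp⟩

theorem swap (hab : Commute a b) (hg : HasNormalForm r a b g) : HasNormalForm r b a g := by
  obtain ⟨i, m, n, hi, rfl⟩ := hg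
  exact ⟨i, n, m, hi, by rw [mul_assoc, (hab.zpow_zpow m n).eq, ← mul_assoc]⟩

theorem involution_mul (hr : r * r = 1) (hg : HasNormalForm r a b g) :
    HasNormalForm r a b (r * g) := by
  obtain ⟨i, m, n, hi, rfl⟩ := hg
  interval_cases i
  · exact ⟨1, m, n, le_rfl, by simp [mul_assoc]⟩
  · exact ⟨0, m, n, zero_le_one, by simp [← mul_assoc, hr]⟩

theorem mul_of_mul_eq_mul_inv (ha : a * r = r * a⁻¹) (hg : HasNormalForm r a b g) :
    HasNormalForm r a b (a * g) := by
  obtain ⟨i, m, n, hi, rfl⟩ := hg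
  interval_cases i
  · exact ⟨0, 1 + m, n, zero_le_one, by simp [zpow_one_add, mul_assoc]⟩
  · refine ⟨1, -1 + m, n, le_rfl, ?_⟩
    rw [pow_one, zpow_add, zpow_neg_one, ← mul_assoc, ← mul_assoc, ← mul_assoc, ha]

end HasNormalForm

theorem mul_mul_eq_mul_inv_of_mul_self_eq_one {G : Type*} [Group G] {s t : G}
    (hs : s * s = 1) (ht : t * t = 1) : s * t * s = s * (s * t)⁻¹ := by
  rw [mul_inv_rev, inv_eq_of_mul_eq_one_right hs, inv_eq_of_mul_eq_one_right ht, mul_assoc]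

section FourInvolutions

variable {G : Type*} [Group G] {r₀ r₀' r₁ r₁' : G}

theorem eq_mul_mul_of_mul_mul_mul_eq_one (h0 : r₀ * r₀ = 1) (h0' : r₀' * r₀' = 1)
    (h1' : r₁' * r₁' = 1) (hrel : r₀ * r₀' * r₁ * r₁' = 1) : r₁ = r₀' * r₀ * r₁' := calc
  r₁ = r₀' * (r₀ * r₀) * r₀' * r₁ * (r₁' * r₁') := by simp [h0, h0', h1']
  _ = r₀' * r₀ * (r₀ * r₀' * r₁ * r₁') * r₁' := by group
  _ = r₀' * r₀ * r₁' := by rw [hrel, mul_one]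

theorem commute_mul_mul_of_mul_mul_mul_eq_one (h0 : r₀ * r₀ = 1) (h0' : r₀' * r₀' = 1)
    (h1 : r₁ * r₁ = 1) (h1' : r₁' * r₁' = 1) (hrel : r₀ * r₀' * r₁ * r₁' = 1) :
    Commute (r₀ * r₀') (r₀ * r₁') := by
  have hr₁ := eq_mul_mul_of_mul_mul_mul_eq_one h0 h0' h1' hrel
  have hr₁_inv : r₁ = r₁' * r₀ * r₀' := by
    rw [← inv_eq_of_mul_eq_one_right h1, hr₁]
    simp only [mul_inv_rev, inv_eq_of_mul_eq_one_right h0, inv_eq_of_mul_eq_one_right h0',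
      inv_eq_of_mul_eq_one_right h1', mul_assoc]
  calc r₀ * r₀' * (r₀ * r₁') = r₀ * (r₀' * r₀ * r₁') := by group
    _ = r₀ * (r₁' * r₀ * r₀') := by rw [← hr₁, ← hr₁_inv]
    _ = r₀ * r₁' * (r₀ * r₀') := by group

end FourInvolutions

theorem stmt8 {G : Type*} [Group G] (r₀ r₀' r₁ r₁' : G)
    (hgen : Subgroup.closure {r₀, r₀', r₁, r₁'} = ⊤)
    (h0 : r₀ * r₀ = 1) (h0' : r₀' * r₀' = 1)
    (h1 : r₁ * r₁ = 1) (h1' : r₁' * r₁' = 1)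
    (hrel : r₀ * r₀' * r₁ * r₁' = 1) :
    ∀ g : G, ∃ (i : ℕ) (m n : ℤ), i ≤ 1 ∧
      g = r₀ ^ i * (r₀ * r₀') ^ m * (r₀ * r₁') ^ n := by
  have ha := mul_mul_eq_mul_inv_of_mul_self_eq_one h0 h0'
  have hb := mul_mul_eq_mul_inv_of_mul_self_eq_one h0 h1'
  have hab := commute_mul_mul_of_mul_mul_mul_eq_one h0 h0' h1 h1' hrel
  -- Left multiplication by `b` is that by `a` after swapping the commuting `a` and `b`.
  have hb_mul {g : G} (hg : HasNormalForm r₀ (r₀ * r₀') (r₀ * r₁') g) :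
      HasNormalForm r₀ (r₀ * r₀') (r₀ * r₁') (r₀ * r₁' * g) :=
    ((hg.swap hab).mul_of_mul_eq_mul_inv hb).swap hab.symm
  intro g
  refine Subgroup.induction_of_closure_eq_top_of_involutions hgen
    (by rintro x (rfl | rfl | rfl | rfl) <;> assumption) HasNormalForm.one ?_ g
  rintro x (hx | hx | hx | hx) g hg <;> subst x
  · exact hg.involution_mul h0
  · rw [show r₀' * g = r₀ * (r₀ * r₀' * g) by simp only [← mul_assoc, h0, one_mul]]
    exact (hg.mul_of_mul_eq_mul_inv ha).involution_mul h0
  · rw [show r₁ * g = r₀ * (r₀ * r₀' * (r₀ * r₁' * g)) by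
      simp only [eq_mul_mul_of_mul_mul_mul_eq_one h0 h0' h1' hrel, ← mul_assoc, h0, one_mul]]
    exact ((hb_mul hg).mul_of_mul_eq_mul_inv ha).involution_mul h0
  · rw [show r₁' * g = r₀ * (r₀ * r₁' * g) by simp only [← mul_assoc, h0, one_mul]]
    exact (hb_mul hg).involution_mul h0
end

section
/- Define ℓ : ℤ × ℤ → ℕ by ℓ(m,n) = 2(|m|+|n|) if m,n ≥ 0 or m,n ≤ 0, and ℓ(m,n) = 2·max(|m|,|n|) if m·n < 0. Then for every positive integer k, the number of pairs (m,n) ∈ ℤ × ℤ with ℓ(m,n) = 2k equals 6k, and there are no pairs with ℓ(m,n) odd. -/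
/-!
`ellLen` is twice the hexagonal norm `max (|m|, |n|, |m + n|)`, because `|m + n| = |m| + |n|`
exactly when `m n ≥ 0`. The sphere of radius `k > 0` of this norm is the boundary of the hexagon
with vertices `(k, 0), (0, k), (-k, k), (-k, 0), (0, -k), (k, -k)`; walking each of its six sides
from one vertex up to (but excluding) the next visits `k` points, `6 k` in all.
-/

/-- Length function on the even part of the elliptic Weyl group of type
`A₁⁽¹'¹⁾*`. -/
def ellLen (p : ℤ × ℤ) : ℕ :=
  if 0 ≤ p.1 * p.2 then 2 * (p.1.natAbs + p.2.natAbs)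
  else 2 * max p.1.natAbs p.2.natAbs

def hexNorm (p : ℤ × ℤ) : ℕ :=
  max (max p.1.natAbs p.2.natAbs) (p.1 + p.2).natAbs

lemma ellLen_eq_two_mul_hexNorm (p : ℤ × ℤ) : ellLen p = 2 * hexNorm p := by
  unfold ellLen hexNorm
  split_ifs with h
  · rcases mul_nonneg_iff.mp h with ⟨h1, h2⟩ | ⟨h1, h2⟩ <;> omega
  · rcases mul_neg_iff.mp (not_le.mp h) with ⟨h1, h2⟩ | ⟨h1, h2⟩ <;> omega

def hexSide (k : ℕ) : ℕ × ℕ → ℤ × ℤ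
  | (0, t) => (k - t, t)
  | (1, t) => (-t, k)
  | (2, t) => (-k, k - t)
  | (3, t) => (-k + t, -t)
  | (4, t) => (t, -k)
  | (_, t) => (k, -k + t)

lemma hexNorm_hexSide {k t : ℕ} (i : ℕ) (ht : t ≤ k) : hexNorm (hexSide k (i, t)) = k := by
  unfold hexNorm
  match i with
  | 0 | 1 | 2 | 3 | 4 | _ + 5 => simp only [hexSide]; omega

lemma exists_hexSide_eq {k : ℕ} {p : ℤ × ℤ} (hk : 0 < k) (hp : hexNorm p = k) :
    ∃ i < 6, ∃ t < k, hexSide k (i, t) = p := by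
  obtain ⟨m, n⟩ := p
  unfold hexNorm at hp
  simp only [Prod.ext_iff]
  obtain h | h | h | h | h | h :
      (0 < m ∧ 0 ≤ n) ∨ (m ≤ 0 ∧ 0 < m + n) ∨ (0 < n ∧ m + n ≤ 0) ∨
      (m < 0 ∧ n ≤ 0) ∨ (0 ≤ m ∧ m + n < 0) ∨ (n < 0 ∧ 0 ≤ m + n) := by omega
  · exact ⟨0, by omega, n.toNat, by omega, by simp only [hexSide]; omega⟩
  · exact ⟨1, by omega, (-m).toNat, by omega, by simp only [hexSide]; omega⟩
  · exact ⟨2, by omega, (k - n).toNat, by omega, by simp only [hexSide]; omega⟩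
  · exact ⟨3, by omega, (-n).toNat, by omega, by simp only [hexSide]; omega⟩
  · exact ⟨4, by omega, m.toNat, by omega, by simp only [hexSide]; omega⟩
  · exact ⟨5, by omega, (k + n).toNat, by omega, by simp only [hexSide]; omega⟩

lemma hexSide_injOn (k : ℕ) : Set.InjOn (hexSide k) (Set.Iio 6 ×ˢ Set.Iio k) := by
  rintro ⟨i, s⟩ ⟨hi, hs⟩ ⟨j, t⟩ ⟨hj, ht⟩ h
  simp only [Set.mem_Iio] at hi hs hj ht
  interval_cases i <;> interval_cases j <;> simp_all [hexSide, Prod.ext_iff] <;> omega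

lemma setOf_hexNorm_eq {k : ℕ} (hk : 0 < k) :
    {p : ℤ × ℤ | hexNorm p = k} = hexSide k '' (Set.Iio 6 ×ˢ Set.Iio k) := by
  ext p
  constructor
  · intro hp
    obtain ⟨i, hi, t, ht, rfl⟩ := exists_hexSide_eq hk hp
    exact ⟨(i, t), ⟨hi, ht⟩, rfl⟩
  · rintro ⟨⟨i, t⟩, ⟨-, ht⟩, rfl⟩
    exact hexNorm_hexSide i ht.le

lemma ncard_setOf_hexNorm_eq {k : ℕ} (hk : 0 < k) :
    {p : ℤ × ℤ | hexNorm p = k}.ncard = 6 * k := by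
  rw [setOf_hexNorm_eq hk, (hexSide_injOn k).ncard_image, ← Finset.coe_range,
    ← Finset.coe_range, ← Finset.coe_product, Set.ncard_coe_finset, Finset.card_product,
    Finset.card_range, Finset.card_range]

theorem stmt9 :
    (∀ k : ℕ, 0 < k → {p : ℤ × ℤ | ellLen p = 2 * k}.ncard = 6 * k) ∧
    (∀ p : ℤ × ℤ, ¬ Odd (ellLen p)) := by
  refine ⟨fun k hk => ?_, fun p => ?_⟩
  · simp only [ellLen_eq_two_mul_hexNorm, Nat.mul_left_cancel_iff two_pos]
    exact ncard_setOf_hexNorm_eq hk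
  · rw [ellLen_eq_two_mul_hexNorm, Nat.not_odd_iff_even]
    exact even_two_mul _
end

section
/- Define ℓ' : ℤ × ℤ → ℕ by: ℓ'(m,n) = 2(m+n)−1 if m,n ≥ 0 and (m,n) ≠ (0,0); ℓ'(0,0) = 1; ℓ'(m,n) = 2(|m|+|n|)+1 if m,n ≤ 0 and (m,n) ≠ (0,0); ℓ'(m,n) = 2·max(|m|,|n|)−1 if m·n < 0 and m+n > 0; ℓ'(m,n) = 2·max(|m|,|n|)+1 if m·n < 0 and m+n ≤ 0. Then for every positive integer k, the number of pairs (m,n) ∈ ℤ × ℤ with ℓ'(m,n) = 2k−1 equals 3(2k−1). -/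
/-- Length function on the odd coset of the elliptic Weyl group of type
`A₁⁽¹'¹⁾*`. -/
def ellLen' (p : ℤ × ℤ) : ℕ :=
  if p.1 * p.2 < 0 then
    (if 0 < p.1 + p.2 then 2 * max p.1.natAbs p.2.natAbs - 1
     else 2 * max p.1.natAbs p.2.natAbs + 1)
  else if p = (0, 0) then 1
  else if 0 ≤ p.1 ∧ 0 ≤ p.2 then 2 * (p.1.natAbs + p.2.natAbs) - 1
  else 2 * (p.1.natAbs + p.2.natAbs) + 1

/-- Enumeration of the level set `{p | ellLen' p = 2k-1}` by `i < 6k-3`. -/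
def ellIdx (k i : ℕ) : ℤ × ℤ :=
  if i ≤ k then ((i : ℤ), (k : ℤ) - i)
  else if i ≤ 2*k then ((k : ℤ) + 1 - i, (i : ℤ) - 2*k)
  else if i ≤ 3*k-1 then ((k : ℤ), 2*(k:ℤ) - i)
  else if i ≤ 4*k-2 then (3*(k:ℤ) - 1 - i, (k : ℤ))
  else if i ≤ 5*k-3 then (1 - (k:ℤ), (i:ℤ) - 4*k + 2)
  else ((i:ℤ) - 5*k + 3, 1 - (k:ℤ))

lemma ellIdx_inj (k : ℕ) (hk : 0 < k) : Set.InjOn (ellIdx k) {i | i < 6*k-3} := by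
  intro i hi j hj h
  simp only [Set.mem_setOf_eq] at hi hj
  unfold ellIdx at h
  split_ifs at h <;> simp only [Prod.mk.injEq] at h <;> omega

lemma ellIdx_mem (k : ℕ) (hk : 0 < k) (i : ℕ) (hi : i < 6*k-3) :
    ellLen' (ellIdx k i) = 2*k-1 := by
  unfold ellIdx ellLen'
  split_ifs
  all_goals try simp only [Nat.max_def, Prod.mk.injEq, not_and_or, not_le, not_lt] at *
  all_goals try split_ifs
  all_goals
    first
      | omega
      | (rcases mul_neg_iff.mp (by assumption) with ⟨ha, hb⟩ | ⟨ha, hb⟩ <;> omega)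
      | (rcases mul_nonneg_iff.mp (by assumption) with ⟨ha, hb⟩ | ⟨ha, hb⟩ <;> omega)

lemma ellIdx_surj (k : ℕ) (hk : 0 < k) (p : ℤ × ℤ) (hp : ellLen' p = 2*k-1) :
    ∃ i, i < 6*k-3 ∧ ellIdx k i = p := by
  obtain ⟨m, n⟩ := p
  unfold ellLen' at hp
  simp only [Nat.max_def, Prod.mk.injEq] at hp
  split_ifs at hp with h1 h2 h3 h4 h5 h6
  · -- m*n < 0, 0 < m+n, |n| ≤ |m| (max = |m|... careful which branch)
    -- here condition was m.natAbs ≤ n.natAbs, so max = n.natAbs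
    rcases mul_neg_iff.mp h1 with ⟨ha, hb⟩ | ⟨ha, hb⟩
    · -- m > 0, n < 0 : then |m| > |n| since sum > 0, contradiction with |m| ≤ |n|
      omega
    · -- m < 0, n > 0 : n = k, m ∈ [-(k-1), -1]; branch D, i = 3k-1+|m|
      refine ⟨3*k - 1 + m.natAbs, by omega, ?_⟩
      unfold ellIdx
      rw [if_neg (by omega), if_neg (by omega), if_neg (by omega), if_pos (by omega)]
      simp only [Prod.mk.injEq]
      omega
  · -- m*n < 0, 0 < m+n, max = m.natAbs
    rcases mul_neg_iff.mp h1 with ⟨ha, hb⟩ | ⟨ha, hb⟩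
    · -- m > 0, n < 0 : m = k, branch C, i = 2k + |n|
      refine ⟨2*k + n.natAbs, by omega, ?_⟩
      unfold ellIdx
      rw [if_neg (by omega), if_neg (by omega), if_pos (by omega)]
      simp only [Prod.mk.injEq]
      omega
    · omega
  · -- m*n < 0, m+n ≤ 0, max = n.natAbs
    rcases mul_neg_iff.mp h1 with ⟨ha, hb⟩ | ⟨ha, hb⟩
    · -- m > 0, n < 0 : |n| = k-1 ≥ |m|, branch F6, i = 5k-3+|m|
      refine ⟨5*k - 3 + m.natAbs, by omega, ?_⟩
      unfold ellIdx
      rw [if_neg (by omega), if_neg (by omega), if_neg (by omega), if_neg (by omega),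
        if_neg (by omega)]
      simp only [Prod.mk.injEq]
      omega
    · -- m < 0, n > 0 : |m| ≥ |n| forces |m| = |n|? no: max = |n| means |m| ≤ |n|,
      -- but m+n ≤ 0 gives |n| ≤ |m|; so |m| = |n| = k-1, n = k-1, m = -(k-1): branch E
      refine ⟨4*k - 2 + n.natAbs, by omega, ?_⟩
      unfold ellIdx
      rw [if_neg (by omega), if_neg (by omega), if_neg (by omega), if_neg (by omega),
        if_pos (by omega)]
      simp only [Prod.mk.injEq]
      omega
  · -- m*n < 0, m+n ≤ 0, max = m.natAbs
    rcases mul_neg_iff.mp h1 with ⟨ha, hb⟩ | ⟨ha, hb⟩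
    · -- m > 0, n < 0, |n| < |m| but m+n ≤ 0 gives |m| ≤ |n|: contradiction
      omega
    · -- m < 0, n > 0 : |m| = k-1, n ∈ [1,k-1], branch E, i = 4k-2+|n|
      refine ⟨4*k - 2 + n.natAbs, by omega, ?_⟩
      unfold ellIdx
      rw [if_neg (by omega), if_neg (by omega), if_neg (by omega), if_neg (by omega),
        if_pos (by omega)]
      simp only [Prod.mk.injEq]
      omega
  · -- p = (0,0), value 1 = 2k-1 so k = 1
    refine ⟨k + 1, by omega, ?_⟩
    unfold ellIdx
    rw [if_neg (by omega), if_pos (by omega)]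
    simp only [Prod.mk.injEq]
    omega
  · -- 0 ≤ m, 0 ≤ n, not (0,0): m+n = k, branch A, i = m.toNat
    obtain ⟨hm, hn⟩ := h6
    refine ⟨m.toNat, by omega, ?_⟩
    unfold ellIdx
    rw [if_pos (by omega)]
    simp only [Prod.mk.injEq]
    omega
  · -- last branch: both ≤ 0, |m|+|n| = k-1, branch B, i = k+1+|m|
    have hmn : m ≤ 0 ∧ n ≤ 0 := by
      rcases mul_nonneg_iff.mp (not_lt.mp h1) with ⟨ha, hb⟩ | ⟨ha, hb⟩
      · exact absurd ⟨ha, hb⟩ h6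
      · exact ⟨ha, hb⟩
    refine ⟨k + 1 + m.natAbs, by omega, ?_⟩
    unfold ellIdx
    rw [if_neg (by omega), if_pos (by omega)]
    simp only [Prod.mk.injEq]
    omega

theorem stmt10 :
    ∀ k : ℕ, 0 < k →
      {p : ℤ × ℤ | ellLen' p = 2 * k - 1}.ncard = 3 * (2 * k - 1) := by
  intro k hk
  have hS : {p : ℤ × ℤ | ellLen' p = 2 * k - 1} = ellIdx k '' {i | i < 6*k-3} := by
    ext p
    simp only [Set.mem_setOf_eq, Set.mem_image]
    constructor
    · intro hp
      obtain ⟨i, hi, hip⟩ := ellIdx_surj k hk p hp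
      exact ⟨i, hi, hip⟩
    · rintro ⟨i, hi, rfl⟩
      exact ellIdx_mem k hk i hi
  rw [hS, Set.ncard_image_of_injOn (ellIdx_inj k hk)]
  have : {i | i < 6*k-3} = ↑(Finset.range (6*k-3)) := by
    ext i; simp
  rw [this, Set.ncard_coe_finset, Finset.card_range]
  omega
end

section
/- Let W_F be the group on generators r0, r1, r2 with relations r_i^2 = 1 and (r_i r_j r_k)^2 = 1 for all permutations (i,j,k) of (0,1,2), with word length ℓ with respect to the generating set {r0, r1, r2}. Then for every positive integer n, the number of elements w ∈ W_F with ℓ(w) = n equals 3n. -/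
/-- The minimal length of an expression of `w` as a product of elements of the
generating set `S`. -/
noncomputable def wordLength {G : Type*} [Group G] (S : Set G) (w : G) : ℕ :=
  sInf {n | ∃ l : List G, (∀ x ∈ l, x ∈ S) ∧ l.length = n ∧ l.prod = w}

/-- Relations of the elliptic Weyl group of type `A₁⁽¹'¹⁾*`:
`rᵢ² = 1` and `(rᵢ rⱼ r_k)² = 1` for all permutations `(i,j,k)` of `(0,1,2)`. -/
def ellRels : Set (FreeGroup (Fin 3)) :=
  {x | ∃ i, x = (FreeGroup.of i) ^ 2} ∪
  {x | ∃ i j k : Fin 3, i ≠ j ∧ j ≠ k ∧ i ≠ k ∧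
    x = (FreeGroup.of i * FreeGroup.of j * FreeGroup.of k) ^ 2}


@[ext] structure EG where
  a : ℤ
  b : ℤ
  e : Bool
  deriving DecidableEq

namespace EG
instance : Mul EG :=
  ⟨fun g h => ⟨g.a + (if g.e then -h.a else h.a), g.b + (if g.e then -h.b else h.b),
    xor g.e h.e⟩⟩
instance : One EG := ⟨⟨0, 0, false⟩⟩
instance : Inv EG := ⟨fun g => if g.e then g else ⟨-g.a, -g.b, false⟩⟩
lemma mul_def (g h : EG) : g * h =
    ⟨g.a + (if g.e then -h.a else h.a), g.b + (if g.e then -h.b else h.b), xor g.e h.e⟩ := rfl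
lemma one_def : (1 : EG) = ⟨0, 0, false⟩ := rfl
lemma inv_def (g : EG) : g⁻¹ = if g.e then g else ⟨-g.a, -g.b, false⟩ := rfl
instance : Group EG where
  mul_assoc := by
    rintro ⟨a, b, e⟩ ⟨c, d, f⟩ ⟨u, v, k⟩
    cases e <;> cases f <;> cases k <;> simp [mul_def, EG.mk.injEq] <;> constructor <;> ring
  one_mul := by rintro ⟨a, b, e⟩; cases e <;> simp [mul_def, one_def]
  mul_one := by rintro ⟨a, b, e⟩; cases e <;> simp [mul_def, one_def]
  inv_mul_cancel := by
    rintro ⟨a, b, e⟩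
    cases e <;> simp [mul_def, one_def, inv_def, EG.mk.injEq]
lemma sq_eq_one {g : EG} (h : g.e = true) : g * g = 1 := by
  rcases g with ⟨a, b, e⟩
  cases e
  · simp at h
  · simp [mul_def, one_def]
end EG

/-- the generators in the concrete model -/
def sg (i : Fin 3) : EG := ⟨if i.val = 1 then 1 else 0, if i.val = 2 then 1 else 0, true⟩

lemma sg_e (i : Fin 3) : (sg i).e = true := rfl

lemma lift_rels : ∀ r ∈ ellRels, (FreeGroup.lift sg) r = 1 := by
  rintro r (⟨i, rfl⟩ | ⟨i, j, k, -, -, -, rfl⟩)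
  · rw [map_pow, FreeGroup.lift_apply_of, pow_two]
    exact EG.sq_eq_one (sg_e i)
  · rw [map_pow, map_mul, map_mul, FreeGroup.lift_apply_of, FreeGroup.lift_apply_of, FreeGroup.lift_apply_of,
      pow_two]
    exact EG.sq_eq_one rfl

abbrev W := PresentedGroup ellRels

def π : W →* EG := PresentedGroup.toGroup lift_rels

def r (i : Fin 3) : W := PresentedGroup.of i

lemma π_of (i : Fin 3) : π (r i) = sg i := PresentedGroup.toGroup.of lift_rels

lemma rel_one {x : FreeGroup (Fin 3)} (hx : x ∈ ellRels) :
    PresentedGroup.mk ellRels x = 1 := by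
  change (QuotientGroup.mk x : W) = 1
  exact (QuotientGroup.eq_one_iff x).mpr (Subgroup.subset_normalClosure hx)

lemma r_sq (i : Fin 3) : r i * r i = 1 := by
  have := rel_one (Or.inl ⟨i, rfl⟩)
  rwa [map_pow, pow_two] at this

lemma r_inv (i : Fin 3) : (r i)⁻¹ = r i := inv_eq_of_mul_eq_one_right (r_sq i)

lemma triple_rel : r 1 * r 0 * r 2 = r 2 * r 0 * r 1 := by
  have h : (r 1 * r 0 * r 2) * (r 1 * r 0 * r 2) = 1 := by
    have := rel_one (Or.inr ⟨1, 0, 2, by decide, by decide, by decide, rfl⟩)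
    rwa [map_pow, map_mul, map_mul, pow_two] at this
  have h2 : r 1 * r 0 * r 2 = (r 1 * r 0 * r 2)⁻¹ := by
    rw [eq_inv_iff_mul_eq_one]; exact h
  rw [h2, mul_inv_rev, mul_inv_rev, r_inv, r_inv, r_inv, mul_assoc]

noncomputable section

def xw : W := r 1 * r 0
def yw : W := r 2 * r 0

lemma comm_xy : Commute xw yw := by
  unfold Commute SemiconjBy xw yw
  calc r 1 * r 0 * (r 2 * r 0) = (r 1 * r 0 * r 2) * r 0 := by group
    _ = (r 2 * r 0 * r 1) * r 0 := by rw [triple_rel]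
    _ = r 2 * r 0 * (r 1 * r 0) := by group

lemma semi_x : SemiconjBy (r 0) xw xw⁻¹ := by
  unfold SemiconjBy xw
  rw [mul_inv_rev, r_inv, r_inv]
  calc r 0 * (r 1 * r 0) = (r 0 * r 1) * r 0 := by group
    _ = (r 0 * r 1) * r 0 := rfl

lemma semi_y : SemiconjBy (r 0) yw yw⁻¹ := by
  unfold SemiconjBy yw
  rw [mul_inv_rev, r_inv, r_inv]
  group

/-- translation part -/
def T (a b : ℤ) : W := xw ^ a * yw ^ b

lemma T_mul (a b c d : ℤ) : T a b * T c d = T (a + c) (b + d) := by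
  unfold T
  have h : (yw ^ b) * (xw ^ c) = (xw ^ c) * (yw ^ b) := (comm_xy.symm.zpow_zpow b c).eq
  rw [zpow_add, zpow_add]
  calc xw ^ a * yw ^ b * (xw ^ c * yw ^ d)
      = xw ^ a * (yw ^ b * xw ^ c) * yw ^ d := by group
    _ = xw ^ a * (xw ^ c * yw ^ b) * yw ^ d := by rw [h]
    _ = xw ^ a * xw ^ c * (yw ^ b * yw ^ d) := by group

lemma conj_T (a b : ℤ) : r 0 * T a b = T (-a) (-b) * r 0 := by
  unfold T
  have hx := (semi_x.zpow_right a).eq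
  have hy := (semi_y.zpow_right b).eq
  calc r 0 * (xw ^ a * yw ^ b) = (r 0 * xw ^ a) * yw ^ b := by group
    _ = (xw⁻¹ ^ a * r 0) * yw ^ b := by rw [hx]
    _ = xw⁻¹ ^ a * (r 0 * yw ^ b) := by group
    _ = xw⁻¹ ^ a * (yw⁻¹ ^ b * r 0) := by rw [hy]
    _ = xw ^ (-a) * yw ^ (-b) * r 0 := by group

def ψfun : EG → W := fun g => T g.a g.b * (if g.e then r 0 else 1)

def ψ : EG →* W := MonoidHom.mk' ψfun (by
  rintro ⟨a, b, e⟩ ⟨c, d, f⟩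
  cases e <;> cases f
  · show T (a + c) (b + d) * 1 = (T a b * 1) * (T c d * 1)
    rw [mul_one, mul_one, mul_one, T_mul]
  · show T (a + c) (b + d) * r 0 = (T a b * 1) * (T c d * r 0)
    rw [mul_one, ← T_mul, mul_assoc]
  · show T (a + -c) (b + -d) * r 0 = (T a b * r 0) * (T c d * 1)
    rw [mul_one, ← T_mul]
    calc T a b * T (-c) (-d) * r 0 = T a b * (T (-c) (-d) * r 0) := by group
      _ = T a b * (r 0 * T c d) := by rw [conj_T]
      _ = T a b * r 0 * T c d := by group
  · show T (a + -c) (b + -d) * 1 = (T a b * r 0) * (T c d * r 0)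
    rw [mul_one, ← T_mul]
    have hr := r_sq 0
    calc T a b * T (-c) (-d)
        = T a b * ((T (-c) (-d) * r 0) * r 0) := by
          rw [mul_assoc (T (-c) (-d)), hr, mul_one]
      _ = T a b * ((r 0 * T c d) * r 0) := by rw [conj_T]
      _ = (T a b * r 0) * (T c d * r 0) := by group)

lemma ψ_pi : ∀ w : W, ψ (π w) = w := by
  have h : ψ.comp π = MonoidHom.id W := by
    apply PresentedGroup.ext
    intro i
    have hπ : π (PresentedGroup.of i) = sg i := π_of i
    simp only [MonoidHom.comp_apply, MonoidHom.id_apply, hπ]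
    fin_cases i
    · show ψfun (sg 0) = r 0
      have : sg 0 = ⟨0, 0, true⟩ := rfl
      simp [ψfun, this, T]
    · show ψfun (sg 1) = r 1
      have : sg 1 = ⟨1, 0, true⟩ := rfl
      simp only [ψfun, this, T, zpow_one, zpow_zero, mul_one, if_true]
      calc xw * r 0 = r 1 * (r 0 * r 0) := by unfold xw; group
        _ = r 1 := by rw [r_sq]; group
    · show ψfun (sg 2) = r 2
      have : sg 2 = ⟨0, 1, true⟩ := rfl
      simp only [ψfun, this, T, zpow_one, zpow_zero, one_mul, if_true]
      calc yw * r 0 = r 2 * (r 0 * r 0) := by unfold yw; group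
        _ = r 2 := by rw [r_sq]; group
  intro w
  exact DFunLike.congr_fun h w

lemma π_inj : Function.Injective π := Function.LeftInverse.injective ψ_pi

lemma zpow_trans (c d : ℤ) (n : ℤ) : (⟨c, d, false⟩ : EG) ^ n = ⟨n * c, n * d, false⟩ := by
  induction n using Int.induction_on with
  | zero => simp [EG.one_def]
  | succ k ih => rw [zpow_add_one, ih]; simp [EG.mul_def, EG.mk.injEq]; constructor <;> ring
  | pred k ih => rw [zpow_sub_one, ih]; simp [EG.mul_def, EG.inv_def, EG.mk.injEq]
                 constructor <;> ring

lemma π_x : π xw = ⟨1, 0, false⟩ := by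
  unfold xw
  rw [map_mul, π_of, π_of]
  rfl

lemma π_y : π yw = ⟨0, 1, false⟩ := by
  unfold yw
  rw [map_mul, π_of, π_of]
  rfl

lemma pi_ψ : ∀ g : EG, π (ψ g) = g := by
  rintro ⟨a, b, e⟩
  show π (ψfun _) = _
  unfold ψfun T
  simp only [map_mul, map_zpow, π_x, π_y]
  rw [zpow_trans, zpow_trans]
  cases e <;> simp [EG.mul_def, π_of, EG.one_def, EG.mk.injEq, sg]

lemma π_surj : Function.Surjective π := fun g => ⟨ψ g, pi_ψ g⟩

end

noncomputable section

/-- positive part norm -/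
def Pn (g : EG) : ℕ := g.a.toNat + g.b.toNat
/-- negative part norm -/
def Qn (g : EG) : ℕ := (-g.a).toNat + (-g.b).toNat

/-- word length in the concrete model -/
def L (g : EG) : ℕ :=
  if g.e then 2 * max (Pn g - 1) (Qn g) + 1 else 2 * max (Pn g) (Qn g)

lemma L_one : L 1 = 0 := rfl

lemma L_eq_zero {g : EG} (h : L g = 0) : g = 1 := by
  rcases g with ⟨a, b, e⟩
  cases e <;> simp [L, Pn, Qn] at h
  ext <;> simp [EG.one_def] <;> omega

lemma sg_mul (i : Fin 3) (g : EG) :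
    sg i * g = ⟨(if i.val = 1 then 1 else 0) - g.a, (if i.val = 2 then 1 else 0) - g.b, !g.e⟩ := by
  rcases g with ⟨a, b, e⟩
  simp [EG.mul_def, sg, EG.mk.injEq]
  constructor <;> ring

lemma step_le (i : Fin 3) (g : EG) : L (sg i * g) ≤ L g + 1 := by
  rcases g with ⟨a, b, e⟩
  rw [sg_mul]
  have h1 : (if i.val = 1 then (1:ℤ) else 0) = 0 ∨ (if i.val = 1 then (1:ℤ) else 0) = 1 := by
    split <;> simp
  have h2 : (if i.val = 2 then (1:ℤ) else 0) = 0 ∨ (if i.val = 2 then (1:ℤ) else 0) = 1 := by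
    split <;> simp
  have h3 : ¬(i.val = 1 ∧ i.val = 2) := by omega
  rcases h1 with h1 | h1 <;> rcases h2 with h2 | h2 <;>
    cases e <;> simp [L, Pn, Qn, h1, h2] <;> omega

lemma descent {g : EG} (h : 1 ≤ L g) : ∃ i : Fin 3, L (sg i * g) + 1 ≤ L g := by
  rcases g with ⟨a, b, e⟩
  have e1 : sg 1 * (⟨a, b, e⟩ : EG) = ⟨1 - a, -b, !e⟩ := by rw [sg_mul]; norm_num
  have e2 : sg 2 * (⟨a, b, e⟩ : EG) = ⟨-a, 1 - b, !e⟩ := by rw [sg_mul]; norm_num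
  have e0 : sg 0 * (⟨a, b, e⟩ : EG) = ⟨-a, -b, !e⟩ := by rw [sg_mul]; norm_num
  cases e
  · -- even element
    by_cases c1 : a = max (Pn ⟨a, b, false⟩) (Qn ⟨a, b, false⟩)
    · exact ⟨1, by rw [e1]; simp only [L, Pn, Qn] at *; simp at *; omega⟩
    · by_cases c2 : b = max (Pn ⟨a, b, false⟩) (Qn ⟨a, b, false⟩)
      · exact ⟨2, by rw [e2]; simp only [L, Pn, Qn] at *; simp at *; omega⟩
      · by_cases c3 : a + b = max (Pn ⟨a, b, false⟩) (Qn ⟨a, b, false⟩)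
        · exact ⟨1, by rw [e1]; simp only [L, Pn, Qn] at *; simp at *; omega⟩
        · exact ⟨0, by rw [e0]; simp only [L, Pn, Qn] at *; simp at *; omega⟩
  · -- odd element
    by_cases c1 : 1 ≤ a
    · exact ⟨1, by rw [e1]; simp only [L, Pn, Qn] at *; simp at *; omega⟩
    · by_cases c2 : 1 ≤ b
      · exact ⟨2, by rw [e2]; simp only [L, Pn, Qn] at *; simp at *; omega⟩
      · exact ⟨0, by rw [e0]; simp only [L, Pn, Qn] at *; simp at *; omega⟩

end

noncomputable section

lemma sg_sq (i : Fin 3) : sg i * sg i = 1 := EG.sq_eq_one (sg_e i)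

lemma exists_word : ∀ (n : ℕ) (w : W), L (π w) = n →
    ∃ l : List W, (∀ x ∈ l, x ∈ Set.range (PresentedGroup.of (rels := ellRels))) ∧
      l.length = n ∧ l.prod = w := by
  intro n
  induction n with
  | zero =>
    intro w hw
    refine ⟨[], by simp, rfl, ?_⟩
    have : π w = 1 := L_eq_zero hw
    have h1 : π w = π 1 := by rw [this, map_one]
    exact (π_inj h1).symm
  | succ n ih =>
    intro w hw
    obtain ⟨i, hi⟩ := descent (g := π w) (by omega)
    have hgi : π (r i * w) = sg i * π w := by rw [map_mul, π_of]
    have hstep : L (π w) ≤ L (sg i * π w) + 1 := by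
      have := step_le i (sg i * π w)
      rwa [← mul_assoc, sg_sq, one_mul] at this
    have hn : L (π (r i * w)) = n := by rw [hgi]; omega
    obtain ⟨l, hl, hlen, hprod⟩ := ih _ hn
    refine ⟨r i :: l, ?_, by simp [hlen], ?_⟩
    · intro x hx
      rcases List.mem_cons.mp hx with rfl | hx
      · exact ⟨i, rfl⟩
      · exact hl x hx
    · rw [List.prod_cons, hprod, ← mul_assoc, r_sq, one_mul]

lemma low_G : ∀ l : List EG, (∀ x ∈ l, ∃ i, x = sg i) → L l.prod ≤ l.length := by
  intro l
  induction l with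
  | nil => simp [L_one]
  | cons x t ih =>
    intro h
    obtain ⟨i, rfl⟩ := h x (by simp)
    have ht := ih fun y hy => h y (by simp [hy])
    calc L ((sg i :: t).prod) = L (sg i * t.prod) := by rw [List.prod_cons]
      _ ≤ L t.prod + 1 := step_le i t.prod
      _ ≤ t.length + 1 := by omega
      _ = (sg i :: t).length := by simp

lemma wordLength_eq (w : W) :
    sInf {n | ∃ l : List W,
        (∀ x ∈ l, x ∈ Set.range (PresentedGroup.of (rels := ellRels))) ∧
        l.length = n ∧ l.prod = w} = L (π w) := by
  have hmem : L (π w) ∈ {n | ∃ l : List W,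
      (∀ x ∈ l, x ∈ Set.range (PresentedGroup.of (rels := ellRels))) ∧
      l.length = n ∧ l.prod = w} := exists_word _ w rfl
  apply le_antisymm
  · exact Nat.sInf_le hmem
  · obtain ⟨l, hl, hlen, hprod⟩ := Nat.sInf_mem ⟨_, hmem⟩
    have hmap : ∀ x ∈ l.map π, ∃ i, x = sg i := by
      rintro x hx
      rw [List.mem_map] at hx
      obtain ⟨y, hy, rfl⟩ := hx
      obtain ⟨i, rfl⟩ := hl y hy
      exact ⟨i, by rw [← π_of i]; rfl⟩
    have := low_G (l.map π) hmap
    rw [← map_list_prod π l, hprod] at this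
    simpa [hlen] using this

end

noncomputable section

/-- walk around the hexagonal sphere of radius `n` -/
def walk (n t : ℕ) : EG :=
  ⟨if t < (n+1)/2 + n/2 then (((n+1)/2 : ℕ) : ℤ) - t
    else if t < 2*((n+1)/2) + n/2 then -((n/2 : ℕ) : ℤ)
    else if t < 3*((n+1)/2) + 2*(n/2) then (t : ℤ) - 2*(((n+1)/2 : ℕ) : ℤ) - 2*((n/2 : ℕ) : ℤ)
    else (((n+1)/2 : ℕ) : ℤ),
   if t < (n+1)/2 then (t : ℤ)
    else if t < (n+1)/2 + n/2 then (((n+1)/2 : ℕ) : ℤ)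
    else if t < 2*((n+1)/2) + 2*(n/2) then 2*(((n+1)/2 : ℕ) : ℤ) + ((n/2 : ℕ) : ℤ) - t
    else if t < 3*((n+1)/2) + 2*(n/2) then -((n/2 : ℕ) : ℤ)
    else (t : ℤ) - 3*(((n+1)/2 : ℕ) : ℤ) - 3*((n/2 : ℕ) : ℤ),
   decide (n % 2 = 1)⟩

lemma L_walk (n t : ℕ) (hn : 1 ≤ n) (ht : t < 3*n) : L (walk n t) = n := by
  by_cases h2 : n % 2 = 1
  · simp only [walk, h2, decide_eq_true_eq, L, Pn, Qn, if_true, decide_true]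
    split_ifs <;> omega
  · have h2' : ¬ (n % 2 = 1) := h2
    simp only [walk, L, Pn, Qn]
    simp only [decide_eq_false h2']
    simp only [Bool.false_eq_true, if_false]
    split_ifs <;> omega

set_option maxHeartbeats 1000000 in
lemma walk_inj (n : ℕ) (hn : 1 ≤ n) :
    ∀ t1, t1 < 3*n → ∀ t2, t2 < 3*n → walk n t1 = walk n t2 → t1 = t2 := by
  intro t1 h1 t2 h2 h
  have ha := congrArg EG.a h
  have hb := congrArg EG.b h
  simp only [walk] at ha hb
  split_ifs at ha hb <;> omega

set_option maxHeartbeats 2000000 in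
lemma walk_surj (n : ℕ) (hn : 1 ≤ n) (g : EG) (hg : L g = n) :
    ∃ t, t < 3*n ∧ walk n t = g := by
  rcases g with ⟨a, b, e⟩
  cases e
  · -- even: n = 2 * max P Q
    simp only [L, Pn, Qn, Bool.false_eq_true, if_false] at hg
    have hpar : n % 2 = 0 := by omega
    have he : decide (n % 2 = 1) = false := by simp [hpar]
    by_cases c1 : 1 ≤ a ∧ 0 ≤ b
    · refine ⟨b.toNat, by omega, ?_⟩
      refine EG.ext ?_ ?_ ?_ <;> simp only [walk, he] <;> try split_ifs <;> omega
    · by_cases c2 : 1 ≤ b ∧ -((n/2 : ℕ) : ℤ) < a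
      · refine ⟨(n+1)/2 + (-a).toNat, by omega, ?_⟩
        refine EG.ext ?_ ?_ ?_ <;> simp only [walk, he] <;> try split_ifs <;> omega
      · by_cases c3 : 1 ≤ b
        · refine ⟨2*((n+1)/2) + n/2 - b.toNat, by omega, ?_⟩
          refine EG.ext ?_ ?_ ?_ <;> simp only [walk, he] <;> try split_ifs <;> omega
        · by_cases c4 : a ≤ -1 ∧ b ≤ 0
          · refine ⟨2*((n+1)/2) + 2*(n/2) - (-a).toNat, by omega, ?_⟩
            refine EG.ext ?_ ?_ ?_ <;> simp only [walk, he] <;> try split_ifs <;> omega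
          · by_cases c5 : a = (((n+1)/2 : ℕ) : ℤ) ∧ b ≤ -1
            · refine ⟨3*((n+1)/2) + 3*(n/2) - (-b).toNat, by omega, ?_⟩
              refine EG.ext ?_ ?_ ?_ <;> simp only [walk, he] <;> try split_ifs <;> omega
            · refine ⟨2*((n+1)/2) + 2*(n/2) + a.toNat, by omega, ?_⟩
              refine EG.ext ?_ ?_ ?_ <;> simp only [walk, he] <;> try split_ifs <;> omega
  · -- odd
    simp only [L, Pn, Qn, if_true] at hg
    have hpar : n % 2 = 1 := by omega
    have he : decide (n % 2 = 1) = true := by simp [hpar]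
    by_cases c1 : 1 ≤ a ∧ 0 ≤ b
    · refine ⟨b.toNat, by omega, ?_⟩
      refine EG.ext ?_ ?_ ?_ <;> simp only [walk, he] <;> try split_ifs <;> omega
    · by_cases c2 : 1 ≤ b ∧ -((n/2 : ℕ) : ℤ) < a
      · refine ⟨(n+1)/2 + (-a).toNat, by omega, ?_⟩
        refine EG.ext ?_ ?_ ?_ <;> simp only [walk, he] <;> try split_ifs <;> omega
      · by_cases c3 : 1 ≤ b
        · refine ⟨2*((n+1)/2) + n/2 - b.toNat, by omega, ?_⟩
          refine EG.ext ?_ ?_ ?_ <;> simp only [walk, he] <;> try split_ifs <;> omega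
        · by_cases c4 : a ≤ -1 ∧ b ≤ 0
          · refine ⟨2*((n+1)/2) + 2*(n/2) - (-a).toNat, by omega, ?_⟩
            refine EG.ext ?_ ?_ ?_ <;> simp only [walk, he] <;> try split_ifs <;> omega
          · by_cases c5 : a = (((n+1)/2 : ℕ) : ℤ) ∧ b ≤ -1
            · refine ⟨3*((n+1)/2) + 3*(n/2) - (-b).toNat, by omega, ?_⟩
              refine EG.ext ?_ ?_ ?_ <;> simp only [walk, he] <;> try split_ifs <;> omega
            · refine ⟨2*((n+1)/2) + 2*(n/2) + a.toNat, by omega, ?_⟩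
              refine EG.ext ?_ ?_ ?_ <;> simp only [walk, he] <;> try split_ifs <;> omega

lemma card_shell (n : ℕ) (hn : 0 < n) : {g : EG | L g = n}.ncard = 3 * n := by
  have hset : {g : EG | L g = n} = ↑((Finset.range (3*n)).image (walk n)) := by
    ext g
    simp only [Set.mem_setOf_eq, Finset.coe_image, Set.mem_image, Finset.mem_coe,
      Finset.mem_range]
    constructor
    · intro hg
      obtain ⟨t, ht, hw⟩ := walk_surj n hn g hg
      exact ⟨t, ht, hw⟩
    · rintro ⟨t, ht, rfl⟩
      exact L_walk n t hn ht
  rw [hset, Set.ncard_coe_finset, Finset.card_image_of_injOn, Finset.card_range]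
  intro t1 h1 t2 h2 h
  exact walk_inj n hn t1 (Finset.mem_range.mp h1) t2 (Finset.mem_range.mp h2) h

end

theorem stmt11 :
    ∀ n : ℕ, 0 < n →
      {w : PresentedGroup ellRels |
        wordLength (Set.range (PresentedGroup.of (rels := ellRels))) w = n}.ncard
        = 3 * n := by
  intro n hn
  have hpre : {w : PresentedGroup ellRels |
      wordLength (Set.range (PresentedGroup.of (rels := ellRels))) w = n}
      = π ⁻¹' {g : EG | L g = n} := by
    ext w
    simp only [Set.mem_setOf_eq, Set.mem_preimage]
    have hw : wordLength (Set.range (PresentedGroup.of (rels := ellRels))) w = L (π w) :=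
      wordLength_eq w
    rw [hw]
  rw [hpre]
  have himg : π '' (π ⁻¹' {g : EG | L g = n}) = {g : EG | L g = n} :=
    Set.image_preimage_eq _ π_surj
  have hcard := Set.ncard_image_of_injective (π ⁻¹' {g : EG | L g = n}) π_inj
  rw [himg] at hcard
  rw [← hcard]
  exact card_shell n hn
end

section
/- Define ℓ'' : ℤ × ℤ → ℕ by ℓ''(m,n) = 2·max(|m|,|n|) − 1 if m+n > 0, and ℓ''(m,n) = 2·max(|m|,|n|) + 1 if m+n ≤ 0. Then for every positive integer k, the number of pairs (m,n) ∈ ℤ × ℤ with ℓ''(m,n) = 2k−1 equals 4(2k−1). -/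
/-!
Writing `ℓ''(m, n) = max (|2m - 1|, |2n - 1|)` turns `ℓ''` into the sup norm of the
half-integer point `(m - 1/2, n - 1/2)`, doubled. Hence `ℓ'' < 2k` exactly on the square
`[1 - k, k]²` with `(2k)²` lattice points, and since `ℓ''` is odd, the level set
`ℓ'' = 2k - 1` is the ring between the squares of sides `2k` and `2k - 2`, of
`(2k)² - (2k - 2)² = 4(2k - 1)` points.
-/

/-- Length function on the odd coset of the elliptic Weyl group of type
`A₁⁽¹'¹⁾`. -/
def ellLen'' (p : ℤ × ℤ) : ℕ :=
  if 0 < p.1 + p.2 then 2 * max p.1.natAbs p.2.natAbs - 1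
  else 2 * max p.1.natAbs p.2.natAbs + 1

theorem ellLen''_eq_max_natAbs (p : ℤ × ℤ) :
    ellLen'' p = max (2 * p.1 - 1).natAbs (2 * p.2 - 1).natAbs := by
  unfold ellLen''
  split_ifs <;> omega

theorem ellLen''_odd (p : ℤ × ℤ) : Odd (ellLen'' p) := by
  rw [Nat.odd_iff, ellLen''_eq_max_natAbs]
  omega

noncomputable def shiftedSquare (k : ℕ) : Finset (ℤ × ℤ) :=
  Finset.Icc (1 - k, 1 - k) (k, k)

theorem card_shiftedSquare (k : ℕ) : (shiftedSquare k).card = (2 * k) ^ 2 := by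
  rw [shiftedSquare, Finset.card_Icc_prod, Int.card_Icc, sq]
  congr 1 <;> omega

theorem shiftedSquare_mono {j k : ℕ} (h : j ≤ k) : shiftedSquare j ⊆ shiftedSquare k :=
  Finset.Icc_subset_Icc (Prod.mk_le_mk.mpr ⟨by omega, by omega⟩)
    (Prod.mk_le_mk.mpr ⟨by omega, by omega⟩)

theorem ellLen''_lt_two_mul_iff (p : ℤ × ℤ) (k : ℕ) :
    ellLen'' p < 2 * k ↔ p ∈ shiftedSquare k := by
  rw [ellLen''_eq_max_natAbs, shiftedSquare, Finset.mem_Icc, Prod.mk_le_mk, Prod.mk_le_mk]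
  omega

theorem setOf_ellLen''_eq (j : ℕ) :
    {p : ℤ × ℤ | ellLen'' p = 2 * j + 1} = ↑(shiftedSquare (j + 1) \ shiftedSquare j) := by
  ext p
  have hodd := Nat.odd_iff.mp (ellLen''_odd p)
  simp only [Set.mem_ofPred_eq, Finset.coe_sdiff, Set.mem_sdiff, Finset.mem_coe,
    ← ellLen''_lt_two_mul_iff]
  omega

theorem stmt13 :
    ∀ k : ℕ, 0 < k →
      {p : ℤ × ℤ | ellLen'' p = 2 * k - 1}.ncard = 4 * (2 * k - 1) := by
  intro k hk
  obtain ⟨j, rfl⟩ : ∃ j, k = j + 1 := ⟨k - 1, by omega⟩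
  rw [show 2 * (j + 1) - 1 = 2 * j + 1 by omega, setOf_ellLen''_eq, Set.ncard_coe_finset,
    Finset.card_sdiff_of_subset (shiftedSquare_mono (Nat.le_add_right j 1)), card_shiftedSquare,
    card_shiftedSquare]
  exact Nat.sub_eq_of_eq_add (by ring)
end

section
/- In a group G generated by involutions r0, r1, r2 satisfying r_i r_j r_k = r_k r_j r_i for all permutations of (0,1,2), for integers m > 0 > n with m ≥ |n|, the element (r0 r1)^m (r0 r2)^n can be written as a product of exactly 2m generators, namely (r0 r1)^(m−|n|) · (r2 r1)^(|n|). -/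
/-!
Put `a = r₀r₁` and `b = r₂r₀ = (r₀r₂)⁻¹`. The relation `r₀r₁r₂ = r₂r₁r₀` together with `r₀² = 1`
gives `ab = r₂r₁ = ba`, so `a` and `b` commute and `aᵐ b⁻ⁿ = aᵐ⁺ⁿ (a⁻ⁿ b⁻ⁿ) = aᵐ⁺ⁿ (ab)⁻ⁿ`.
-/

section

variable {G : Type*} [Group G]

theorem Commute.zpow_mul_inv_zpow {a b : G} (h : Commute a b) (m n : ℤ) :
    a ^ m * b⁻¹ ^ n = a ^ (m + n) * (a * b) ^ (-n) := by
  rw [h.mul_zpow, inv_zpow', zpow_add, mul_assoc, ← mul_assoc (a ^ n), ← zpow_add]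
  simp

variable {x y z : G}

theorem mul_mul_mul_self_of_mul_mul_comm (hx : x * x = 1) (hxyz : x * y * z = z * y * x) :
    x * y * (z * x) = z * y := by
  rw [← mul_assoc, hxyz, mul_assoc, hx, mul_one]

theorem commute_mul_mul_of_mul_mul_comm_s17 (hx : x * x = 1) (hxyz : x * y * z = z * y * x) :
    Commute (x * y) (z * x) := by
  have hzx : z * x * (x * y) = z * y := by
    rw [← mul_assoc, mul_assoc z, hx, mul_one]
  exact (mul_mul_mul_self_of_mul_mul_comm hx hxyz).trans hzx.symm

end

theorem stmt17 {G : Type*} [Group G] (r : Fin 3 → G)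
    (hinv : ∀ i, r i * r i = 1)
    (hrel : ∀ i j k : Fin 3, i ≠ j → j ≠ k → i ≠ k →
      r i * r j * r k = r k * r j * r i) :
    ∀ m n : ℤ, 0 < m → n < 0 → -n ≤ m →
      (r 0 * r 1) ^ m * (r 0 * r 2) ^ n =
        (r 0 * r 1) ^ (m + n) * (r 2 * r 1) ^ (-n) := by
  intro m n _ _ _
  have h012 := hrel 0 1 2 (by decide) (by decide) (by decide)
  have hinv02 : (r 2 * r 0)⁻¹ = r 0 * r 2 := by
    rw [mul_inv_rev, inv_eq_of_mul_eq_one_right (hinv 0), inv_eq_of_mul_eq_one_right (hinv 2)]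
  rw [← hinv02, ← mul_mul_mul_self_of_mul_mul_comm (hinv 0) h012]
  exact (commute_mul_mul_of_mul_mul_comm_s17 (hinv 0) h012).zpow_mul_inv_zpow m n
end

section
/- In the group W_F presented by generators r0, r1, r2 with relations r_i^2 = 1 and r_i r_j r_k = r_k r_j r_i for all permutations (i,j,k) of (0,1,2), the word length of (r0 r1)^m (r0 r2)^n with respect to {r0, r1, r2} equals 2(|m|+|n|) if m and n have the same sign (or one is zero), and equals 2·max(|m|,|n|) if m·n < 0. -/
/-- Relations of the elliptic Weyl group of type `A₁⁽¹'¹⁾*`: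
`rᵢ² = 1` and `rᵢ rⱼ r_k = r_k rⱼ rᵢ` for all permutations `(i,j,k)`. -/
def ellRels' : Set (FreeGroup (Fin 3)) :=
  {x | ∃ i, x = (FreeGroup.of i) ^ 2} ∪
  {x | ∃ i j k : Fin 3, i ≠ j ∧ j ≠ k ∧ i ≠ k ∧
    x = (FreeGroup.of i * FreeGroup.of j * FreeGroup.of k) *
      (FreeGroup.of k * FreeGroup.of j * FreeGroup.of i)⁻¹}

namespace Stmt19

abbrev W := PresentedGroup ellRels'

abbrev g (i : Fin 3) : W := PresentedGroup.of i

lemma rel_one {r : FreeGroup (Fin 3)} (hr : r ∈ ellRels') :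
    PresentedGroup.mk ellRels' r = 1 :=
  (QuotientGroup.eq_one_iff _).mpr (Subgroup.subset_normalClosure hr)

lemma sq (i : Fin 3) : g i * g i = 1 := by
  have h := rel_one (r := FreeGroup.of i ^ 2) (Or.inl ⟨i, rfl⟩)
  rw [map_pow, pow_two] at h
  exact h

lemma braid {i j k : Fin 3} (hij : i ≠ j) (hjk : j ≠ k) (hik : i ≠ k) :
    g i * g j * g k = g k * g j * g i := by
  have h := rel_one (Or.inr ⟨i, j, k, hij, hjk, hik, rfl⟩)
  rw [map_mul, map_inv, mul_inv_eq_one, map_mul, map_mul, map_mul, map_mul] at h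
  exact h

noncomputable abbrev a : W := g 0 * g 1
noncomputable abbrev b : W := g 0 * g 2

lemma a_inv : a⁻¹ = g 1 * g 0 := by
  rw [mul_inv_rev, inv_eq_of_mul_eq_one_right (sq 0), inv_eq_of_mul_eq_one_right (sq 1)]

lemma b_inv : b⁻¹ = g 2 * g 0 := by
  rw [mul_inv_rev, inv_eq_of_mul_eq_one_right (sq 0), inv_eq_of_mul_eq_one_right (sq 2)]

lemma hab : Commute a b := by
  have h := braid (i := 1) (j := 0) (k := 2) (by decide) (by decide) (by decide)
  show g 0 * g 1 * (g 0 * g 2) = g 0 * g 2 * (g 0 * g 1)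
  calc g 0 * g 1 * (g 0 * g 2) = g 0 * (g 1 * g 0 * g 2) := by group
    _ = g 0 * (g 2 * g 0 * g 1) := by rw [h]
    _ = g 0 * g 2 * (g 0 * g 1) := by group

lemma g12 : g 1 * g 2 = a⁻¹ * b := by
  rw [a_inv]
  calc g 1 * g 2 = g 1 * (g 0 * g 0) * g 2 := by rw [sq 0]; group
    _ = g 1 * g 0 * (g 0 * g 2) := by group

lemma g21 : g 2 * g 1 = b⁻¹ * a := by
  rw [b_inv]
  calc g 2 * g 1 = g 2 * (g 0 * g 0) * g 1 := by rw [sq 0]; group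
    _ = g 2 * g 0 * (g 0 * g 1) := by group

/-- replicate the two-element pattern `[x, y]` `k` times -/
def rep2 {G : Type*} [Group G] (x y : G) : ℕ → List G
  | 0 => []
  | k + 1 => x :: y :: rep2 x y k

lemma length_rep2 {G : Type*} [Group G] (x y : G) (k : ℕ) :
    (rep2 x y k).length = 2 * k := by
  induction k with
  | zero => rfl
  | succ k ih => simp [rep2, ih]; omega

lemma prod_rep2 {G : Type*} [Group G] (x y : G) (k : ℕ) :
    (rep2 x y k).prod = (x * y) ^ k := by
  induction k with
  | zero => simp [rep2]
  | succ k ih => rw [rep2, List.prod_cons, List.prod_cons, ih, pow_succ']; group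

lemma mem_rep2 {G : Type*} [Group G] {x y z : G} {k : ℕ} (h : z ∈ rep2 x y k) :
    z = x ∨ z = y := by
  induction k with
  | zero => simp [rep2] at h
  | succ k ih =>
    rw [rep2, List.mem_cons, List.mem_cons] at h
    rcases h with h | h | h
    · exact Or.inl h
    · exact Or.inr h
    · exact ih h

/-! ### The concrete representation on `ℤ × ℤ` -/

def v : Fin 3 → ℤ × ℤ := ![(0, 0), (1, 0), (0, 1)]

def f (i : Fin 3) : Equiv.Perm (ℤ × ℤ) where
  toFun x := v i - x
  invFun x := v i - x
  left_inv x := by simp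
  right_inv x := by simp

lemma f_apply (i : Fin 3) (x : ℤ × ℤ) : f i x = v i - x := rfl

noncomputable def phi : W →* Equiv.Perm (ℤ × ℤ) :=
  PresentedGroup.toGroup (f := f) (by
    rintro r (⟨i, rfl⟩ | ⟨i, j, k, -, -, -, rfl⟩)
    · rw [map_pow, FreeGroup.lift_apply_of, pow_two]
      refine Equiv.ext fun x => ?_
      simp [Equiv.Perm.mul_apply, f_apply]
    · rw [map_mul, map_inv, mul_inv_eq_one]
      simp only [map_mul, FreeGroup.lift_apply_of]
      refine Equiv.ext fun x => ?_
      simp only [Equiv.Perm.mul_apply, f_apply]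
      abel)

lemma phi_g (i : Fin 3) : phi (g i) = f i := PresentedGroup.toGroup.of _

lemma addLeft_mul (u w : ℤ × ℤ) :
    Equiv.addLeft u * Equiv.addLeft w = Equiv.addLeft (u + w) := by
  refine Equiv.ext fun x => ?_
  simp [Equiv.Perm.mul_apply, add_assoc]

noncomputable def T : Multiplicative (ℤ × ℤ) →* Equiv.Perm (ℤ × ℤ) where
  toFun x := Equiv.addLeft x.toAdd
  map_one' := by refine Equiv.ext fun x => ?_; simp
  map_mul' x y := by rw [addLeft_mul]; rfl

lemma addLeft_zpow (u : ℤ × ℤ) (m : ℤ) :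
    (Equiv.addLeft u) ^ m = Equiv.addLeft (m • u) := by
  have h := map_zpow T (Multiplicative.ofAdd u) m
  have h2 : (Multiplicative.ofAdd u) ^ m = Multiplicative.ofAdd (m • u) := by
    rw [← ofAdd_zsmul]
  rw [h2] at h
  exact h.symm

lemma phi_a : phi a = Equiv.addLeft (-1, 0) := by
  rw [map_mul, phi_g, phi_g]
  refine Equiv.ext fun x => ?_
  simp only [Equiv.Perm.mul_apply, f_apply, v, Equiv.coe_addLeft]
  simp [Prod.ext_iff]
  ring

lemma phi_b : phi b = Equiv.addLeft (0, -1) := by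
  rw [map_mul, phi_g, phi_g]
  refine Equiv.ext fun x => ?_
  simp only [Equiv.Perm.mul_apply, f_apply, v, Equiv.coe_addLeft]
  simp [Prod.ext_iff]
  ring

lemma phi_elem (m n : ℤ) :
    phi (a ^ m * b ^ n) = Equiv.addLeft (-m, -n) := by
  rw [map_mul, map_zpow, map_zpow, phi_a, phi_b, addLeft_zpow, addLeft_zpow, addLeft_mul]
  congr 1
  simp [Prod.ext_iff]

/-! ### Lower bound: counting lemma -/

lemma key (l : List W) (hl : ∀ x ∈ l, x ∈ Set.range (PresentedGroup.of (rels := ellRels'))) :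
    ∃ p q r s : ℕ,
      (phi l.prod) 0 = ((p : ℤ) - q, (r : ℤ) - s) ∧
      p + r ≤ (l.length + 1) / 2 ∧ q + s ≤ l.length / 2 ∧
      ∀ x, (phi l.prod) x = (phi l.prod) 0 + (if Even l.length then x else -x) := by
  induction l using List.reverseRecOn with
  | nil => exact ⟨0, 0, 0, 0, by simp; rfl, by simp, by simp, fun x => by simp⟩
  | append_singleton l y ih =>
    obtain ⟨p, q, r, s, hu, hp, hq, hx⟩ := ih (fun x hx => hl x (by simp [hx]))
    obtain ⟨i, rfl⟩ := hl y (by simp)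
    have hval : ∀ x, phi ((l ++ [PresentedGroup.of i]).prod) x
        = phi l.prod 0 + (if Even l.length then v i - x else -(v i - x)) := by
      intro x
      rw [List.prod_append, List.prod_singleton, map_mul, Equiv.Perm.mul_apply, phi_g,
        f_apply, hx (v i - x)]
    have hlen : (l ++ [PresentedGroup.of i]).length = l.length + 1 := by simp
    by_cases hE : Even l.length
    · have hL : l.length % 2 = 0 := Nat.even_iff.mp hE
      have h0 : phi ((l ++ [PresentedGroup.of i]).prod) 0 = phi l.prod 0 + v i := by
        rw [hval 0, if_pos hE]; simp
      have hx' : ∀ x, phi ((l ++ [PresentedGroup.of i]).prod) x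
          = phi ((l ++ [PresentedGroup.of i]).prod) 0
            + (if Even (l ++ [PresentedGroup.of i]).length then x else -x) := by
        intro x
        have hne : ¬ Even (l ++ [PresentedGroup.of i]).length := by
          simp [Nat.even_add_one, hE]
        rw [hval x, if_pos hE, h0, if_neg hne]
        abel
      fin_cases i
      · refine ⟨p, q, r, s, ?_, ?_, ?_, hx'⟩
        · rw [h0, hu]; simp [v]
        · rw [hlen]; omega
        · rw [hlen]; omega
      · refine ⟨p + 1, q, r, s, ?_, ?_, ?_, hx'⟩
        · rw [h0, hu]; simp [v, Prod.ext_iff]; omega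
        · rw [hlen]; omega
        · rw [hlen]; omega
      · refine ⟨p, q, r + 1, s, ?_, ?_, ?_, hx'⟩
        · rw [h0, hu]; simp [v, Prod.ext_iff]; omega
        · rw [hlen]; omega
        · rw [hlen]; omega
    · have hL : l.length % 2 = 1 := Nat.odd_iff.mp (Nat.not_even_iff_odd.mp hE)
      have h0 : phi ((l ++ [PresentedGroup.of i]).prod) 0 = phi l.prod 0 - v i := by
        rw [hval 0, if_neg hE]; simp; abel
      have hx' : ∀ x, phi ((l ++ [PresentedGroup.of i]).prod) x
          = phi ((l ++ [PresentedGroup.of i]).prod) 0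
            + (if Even (l ++ [PresentedGroup.of i]).length then x else -x) := by
        intro x
        have hyes : Even (l ++ [PresentedGroup.of i]).length := by
          simp [Nat.even_add_one, hE]
        rw [hval x, if_neg hE, h0, if_pos hyes]
        abel
      fin_cases i
      · refine ⟨p, q, r, s, ?_, ?_, ?_, hx'⟩
        · rw [h0, hu]; simp [v]
        · rw [hlen]; omega
        · rw [hlen]; omega
      · refine ⟨p, q + 1, r, s, ?_, ?_, ?_, hx'⟩
        · rw [h0, hu]; simp [v, Prod.ext_iff]; omega
        · rw [hlen]; omega
        · rw [hlen]; omega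
      · refine ⟨p, q, r, s + 1, ?_, ?_, ?_, hx'⟩
        · rw [h0, hu]; simp [v, Prod.ext_iff]; omega
        · rw [hlen]; omega
        · rw [hlen]; omega

/-! ### Upper bound: explicit words -/

lemma mem_helper {i j i' j' : Fin 3} {k k' : ℕ} :
    ∀ x ∈ rep2 (g i) (g j) k ++ rep2 (g i') (g j') k',
      x ∈ Set.range (PresentedGroup.of (rels := ellRels')) := by
  intro x hx
  rcases List.mem_append.mp hx with h | h <;> rcases mem_rep2 h with rfl | rfl <;>
    exact ⟨_, rfl⟩

lemma pow_abs_pos (x : W) (k : ℤ) (hk : 0 ≤ k) : x ^ k = x ^ k.natAbs := by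
  rw [← zpow_natCast]; congr 1; omega

lemma pow_abs_neg (x : W) (k : ℤ) (hk : k ≤ 0) : x ^ k = (x⁻¹) ^ k.natAbs := by
  rw [inv_pow, ← zpow_natCast, ← zpow_neg]; congr 1; omega

lemma exists_list (m n : ℤ) :
    ∃ l : List W, (∀ x ∈ l, x ∈ Set.range (PresentedGroup.of (rels := ellRels'))) ∧
      l.length =
        (if 0 ≤ m * n then 2 * (m.natAbs + n.natAbs) else 2 * max m.natAbs n.natAbs) ∧
      l.prod = a ^ m * b ^ n := by
  have c1 : Commute b⁻¹ a := hab.symm.inv_left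
  have c2 : Commute a⁻¹ b := hab.inv_left
  by_cases hmn : 0 ≤ m * n
  · rw [if_pos hmn]
    rcases mul_nonneg_iff.mp hmn with ⟨hm, hn⟩ | ⟨hm, hn⟩
    · refine ⟨rep2 (g 0) (g 1) m.natAbs ++ rep2 (g 0) (g 2) n.natAbs, mem_helper, ?_, ?_⟩
      · rw [List.length_append, length_rep2, length_rep2]; ring
      · rw [List.prod_append, prod_rep2, prod_rep2,
          pow_abs_pos a m hm, pow_abs_pos b n hn]
    · refine ⟨rep2 (g 1) (g 0) m.natAbs ++ rep2 (g 2) (g 0) n.natAbs, mem_helper, ?_, ?_⟩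
      · rw [List.length_append, length_rep2, length_rep2]; ring
      · rw [List.prod_append, prod_rep2, prod_rep2,
          pow_abs_neg a m hm, pow_abs_neg b n hn, a_inv, b_inv]
  · rw [if_neg hmn]
    rcases mul_neg_iff.mp (not_le.mp hmn) with ⟨hm, hn⟩ | ⟨hm, hn⟩
    · -- 0 < m, n < 0
      rcases le_total n.natAbs m.natAbs with hMN | hMN
      · refine ⟨rep2 (g 2) (g 1) n.natAbs ++ rep2 (g 0) (g 1) (m.natAbs - n.natAbs),
          mem_helper, ?_, ?_⟩
        · rw [List.length_append, length_rep2, length_rep2, Nat.max_eq_left hMN]; omega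
        · rw [List.prod_append, prod_rep2, prod_rep2, g21]
          calc (b⁻¹ * a) ^ n.natAbs * a ^ (m.natAbs - n.natAbs)
              = b⁻¹ ^ n.natAbs * a ^ n.natAbs * a ^ (m.natAbs - n.natAbs) := by
                rw [c1.mul_pow]
            _ = b⁻¹ ^ n.natAbs * a ^ (n.natAbs + (m.natAbs - n.natAbs)) := by
                rw [mul_assoc, pow_add]
            _ = b⁻¹ ^ n.natAbs * a ^ m.natAbs := by rw [Nat.add_sub_cancel' hMN]
            _ = a ^ m.natAbs * b⁻¹ ^ n.natAbs := ((hab.inv_right.pow_pow _ _).symm).eq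
            _ = a ^ m * b ^ n := by
                rw [pow_abs_pos a m hm.le, pow_abs_neg b n hn.le]
      · refine ⟨rep2 (g 2) (g 1) m.natAbs ++ rep2 (g 2) (g 0) (n.natAbs - m.natAbs),
          mem_helper, ?_, ?_⟩
        · rw [List.length_append, length_rep2, length_rep2, Nat.max_eq_right hMN]; omega
        · rw [List.prod_append, prod_rep2, prod_rep2, g21, ← b_inv]
          calc (b⁻¹ * a) ^ m.natAbs * b⁻¹ ^ (n.natAbs - m.natAbs)
              = b⁻¹ ^ m.natAbs * a ^ m.natAbs * b⁻¹ ^ (n.natAbs - m.natAbs) := by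
                rw [c1.mul_pow]
            _ = a ^ m.natAbs * b⁻¹ ^ m.natAbs * b⁻¹ ^ (n.natAbs - m.natAbs) := by
                rw [(c1.pow_pow _ _).eq]
            _ = a ^ m.natAbs * b⁻¹ ^ (m.natAbs + (n.natAbs - m.natAbs)) := by
                rw [mul_assoc, pow_add]
            _ = a ^ m.natAbs * b⁻¹ ^ n.natAbs := by rw [Nat.add_sub_cancel' hMN]
            _ = a ^ m * b ^ n := by
                rw [pow_abs_pos a m hm.le, pow_abs_neg b n hn.le]
    · -- m < 0, 0 < n
      rcases le_total m.natAbs n.natAbs with hMN | hMN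
      · refine ⟨rep2 (g 1) (g 2) m.natAbs ++ rep2 (g 0) (g 2) (n.natAbs - m.natAbs),
          mem_helper, ?_, ?_⟩
        · rw [List.length_append, length_rep2, length_rep2, Nat.max_eq_right hMN]; omega
        · rw [List.prod_append, prod_rep2, prod_rep2, g12]
          calc (a⁻¹ * b) ^ m.natAbs * b ^ (n.natAbs - m.natAbs)
              = a⁻¹ ^ m.natAbs * b ^ m.natAbs * b ^ (n.natAbs - m.natAbs) := by
                rw [c2.mul_pow]
            _ = a⁻¹ ^ m.natAbs * b ^ (m.natAbs + (n.natAbs - m.natAbs)) := by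
                rw [mul_assoc, pow_add]
            _ = a⁻¹ ^ m.natAbs * b ^ n.natAbs := by rw [Nat.add_sub_cancel' hMN]
            _ = a ^ m * b ^ n := by
                rw [pow_abs_neg a m hm.le, pow_abs_pos b n hn.le]
      · refine ⟨rep2 (g 1) (g 2) n.natAbs ++ rep2 (g 1) (g 0) (m.natAbs - n.natAbs),
          mem_helper, ?_, ?_⟩
        · rw [List.length_append, length_rep2, length_rep2, Nat.max_eq_left hMN]; omega
        · rw [List.prod_append, prod_rep2, prod_rep2, g12, ← a_inv]
          calc (a⁻¹ * b) ^ n.natAbs * a⁻¹ ^ (m.natAbs - n.natAbs)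
              = a⁻¹ ^ n.natAbs * b ^ n.natAbs * a⁻¹ ^ (m.natAbs - n.natAbs) := by
                rw [c2.mul_pow]
            _ = a⁻¹ ^ n.natAbs * (b ^ n.natAbs * a⁻¹ ^ (m.natAbs - n.natAbs)) := by
                rw [mul_assoc]
            _ = a⁻¹ ^ n.natAbs * (a⁻¹ ^ (m.natAbs - n.natAbs) * b ^ n.natAbs) := by
                rw [(c2.symm.pow_pow _ _).eq]
            _ = a⁻¹ ^ (n.natAbs + (m.natAbs - n.natAbs)) * b ^ n.natAbs := by
                rw [← mul_assoc, pow_add]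
            _ = a⁻¹ ^ m.natAbs * b ^ n.natAbs := by rw [Nat.add_sub_cancel' hMN]
            _ = a ^ m * b ^ n := by
                rw [pow_abs_neg a m hm.le, pow_abs_pos b n hn.le]

end Stmt19

theorem stmt19 :
    ∀ m n : ℤ,
      wordLength (Set.range (PresentedGroup.of (rels := ellRels')))
        ((PresentedGroup.of (rels := ellRels') 0 * PresentedGroup.of 1) ^ m *
          (PresentedGroup.of 0 * PresentedGroup.of 2) ^ n) =
      (if 0 ≤ m * n then 2 * (m.natAbs + n.natAbs)
       else 2 * max m.natAbs n.natAbs) := by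
  intro m n
  obtain ⟨l, hmem, hlen, hprod⟩ := Stmt19.exists_list m n
  unfold wordLength
  apply le_antisymm
  · exact Nat.sInf_le ⟨l, hmem, hlen, hprod⟩
  · refine le_csInf ⟨_, l, hmem, hlen, hprod⟩ ?_
    rintro k ⟨l', hmem', rfl, hprod'⟩
    obtain ⟨p, q, r, s, hu, hp, hq, hx⟩ := Stmt19.key l' hmem'
    have e0 : Stmt19.phi l'.prod 0 = (-m, -n) := by
      rw [hprod', Stmt19.phi_elem]; simp
    have eA : Stmt19.phi l'.prod (1, 0) = (-m, -n) + (1, 0) := by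
      rw [hprod', Stmt19.phi_elem]; simp
    have h1 : (p : ℤ) - q = -m := by
      have h := hu.symm.trans e0
      exact congrArg Prod.fst h
    have h2 : (r : ℤ) - s = -n := by
      have h := hu.symm.trans e0
      exact congrArg Prod.snd h
    have hEv : l'.length % 2 = 0 := by
      rw [Nat.even_iff.symm]
      by_contra hE
      have hxx := hx (1, 0)
      rw [if_neg hE, e0, eA] at hxx
      have := congrArg Prod.fst hxx
      simp [Prod.ext_iff] at this
    split_ifs with h
    · rcases mul_nonneg_iff.mp h with ⟨hm, hn⟩ | ⟨hm, hn⟩ <;> omega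
    · rcases mul_neg_iff.mp (not_le.mp h) with ⟨hm, hn⟩ | ⟨hm, hn⟩ <;>
      · rcases le_total m.natAbs n.natAbs with hMN | hMN
        · rw [Nat.max_eq_right hMN]; omega
        · rw [Nat.max_eq_left hMN]; omega
end
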